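/- arXiv:1310.3192 — 3 statements merged into one kernel-verified Lean document; each statement's English description precedes it below -/
import Mathlib

section
/- Let Ω ⊂ ℝ^N be bounded open with C² boundary, d the signed distance (positive inside), and ξ ∈ ∂Ω a point satisfying the Fichera condition: either Dd(ξ)·A(ξ)·Dd(ξ) > 0, or (Dd(ξ)·A(ξ)·Dd(ξ) = 0 and Tr(A(ξ)D²d(ξ)) + b(ξ)·Dd(ξ) < 0), where A, b are continuous on cl(Ω) near ξ and A(x) ≥ 0. Then there exist δ > 0 and a ball B centered at ξ so that w(x) := log(δ + d(x)) - log δ is nonnegative on cl(Ω ∩ B), vanishes at ξ, is smooth on Ω ∩ B, and satisfies -Tr(A(x)D²w(x)) - b(x)·Dw(x) ≥ 1 on Ω ∩ B (i.e., w is a barrier at ξ for the linear operator without zero-order term). -/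
open Matrix

lemma trace_mul_vecMulVec' {N : ℕ} (A : Matrix (Fin N) (Fin N) ℝ) (u : Fin N → ℝ) :
    (A * vecMulVec u u).trace = u ⬝ᵥ (A *ᵥ u) := by
  simp only [Matrix.trace, Matrix.diag, Matrix.mul_apply, Matrix.vecMulVec_apply,
    dotProduct, Matrix.mulVec, Finset.mul_sum]
  exact Finset.sum_congr rfl fun i _ => Finset.sum_congr rfl fun j _ => by ring

lemma key_rewrite {N : ℕ} (A M : Matrix (Fin N) (Fin N) ℝ) (bv u : Fin N → ℝ) (r : ℝ) :
    -(A * (r⁻¹ • M - (r ^ 2)⁻¹ • vecMulVec u u)).trace - bv ⬝ᵥ (r⁻¹ • u)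
      = (r ^ 2)⁻¹ * (u ⬝ᵥ (A *ᵥ u)) - r⁻¹ * ((A * M).trace + bv ⬝ᵥ u) := by
  rw [Matrix.mul_sub, Matrix.mul_smul, Matrix.mul_smul, Matrix.trace_sub,
    Matrix.trace_smul, Matrix.trace_smul, trace_mul_vecMulVec', dotProduct_smul]
  simp only [smul_eq_mul]
  ring

/-- at a boundary point ξ satisfying the Fichera condition, for
suitable δ > 0 and a ball B = B(ξ,ρ), the function w = log(δ+d) - log δ is a
barrier: nonnegative on Ω ∩ B, vanishing at ξ, and
-Tr(A·D²w) - b·Dw ≥ 1 on Ω ∩ B, where Dw = (δ+d)⁻¹Dd and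
D²w = (δ+d)⁻¹D²d - (δ+d)⁻²Dd⊗Dd. -/
theorem stmt15 {N : ℕ} (Ω : Set (Fin N → ℝ)) (hΩ : IsOpen Ω)
    (ξ : Fin N → ℝ) (hξ : ξ ∈ frontier Ω)
    (d : (Fin N → ℝ) → ℝ) (hdc : ContinuousAt d ξ) (hdξ : d ξ = 0)
    (hdpos : ∀ x ∈ Ω, 0 < d x)
    (Dd : (Fin N → ℝ) → (Fin N → ℝ)) (D2d : (Fin N → ℝ) → Matrix (Fin N) (Fin N) ℝ)
    (A : (Fin N → ℝ) → Matrix (Fin N) (Fin N) ℝ) (b : (Fin N → ℝ) → (Fin N → ℝ))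
    (hDd : ContinuousAt Dd ξ) (hD2d : ContinuousAt D2d ξ)
    (hA : ContinuousAt A ξ) (hb : ContinuousAt b ξ)
    (hApsd : ∀ x, (A x).PosSemidef)
    (hFichera : 0 < Dd ξ ⬝ᵥ (A ξ *ᵥ Dd ξ) ∨
      (Dd ξ ⬝ᵥ (A ξ *ᵥ Dd ξ) = 0 ∧ (A ξ * D2d ξ).trace + b ξ ⬝ᵥ Dd ξ < 0)) :
    ∃ δ > (0:ℝ), ∃ ρ > (0:ℝ),
      Real.log (δ + d ξ) - Real.log δ = 0 ∧
      ∀ x ∈ Ω ∩ Metric.ball ξ ρ,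
        0 ≤ Real.log (δ + d x) - Real.log δ ∧
        1 ≤ -(A x * ((δ + d x)⁻¹ • D2d x
              - ((δ + d x) ^ 2)⁻¹ • vecMulVec (Dd x) (Dd x))).trace
            - b x ⬝ᵥ ((δ + d x)⁻¹ • Dd x) := by
  -- entrywise continuity
  have hAij : ∀ i j, ContinuousAt (fun x => A x i j) ξ := fun i j =>
    (continuous_apply j).continuousAt.comp ((continuous_apply i).continuousAt.comp hA)
  have hD2dij : ∀ i j, ContinuousAt (fun x => D2d x i j) ξ := fun i j =>
    (continuous_apply j).continuousAt.comp ((continuous_apply i).continuousAt.comp hD2d)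
  have hDdi : ∀ i, ContinuousAt (fun x => Dd x i) ξ := fun i =>
    (continuous_apply i).continuousAt.comp hDd
  have hbi : ∀ i, ContinuousAt (fun x => b x i) ξ := fun i =>
    (continuous_apply i).continuousAt.comp hb
  obtain ⟨q, hq_def⟩ : ∃ q : (Fin N → ℝ) → ℝ, q = fun x => Dd x ⬝ᵥ (A x *ᵥ Dd x) := ⟨_, rfl⟩
  obtain ⟨L, hL_def⟩ : ∃ L : (Fin N → ℝ) → ℝ,
      L = fun x => (A x * D2d x).trace + b x ⬝ᵥ Dd x := ⟨_, rfl⟩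
  have hq_eq : ∀ x, q x = Dd x ⬝ᵥ (A x *ᵥ Dd x) := fun x => by rw [hq_def]
  have hL_eq : ∀ x, L x = (A x * D2d x).trace + b x ⬝ᵥ Dd x := fun x => by rw [hL_def]
  have hqc : ContinuousAt q ξ := by
    rw [hq_def]
    have h : ContinuousAt (fun x => ∑ i, Dd x i * ∑ j, A x i j * Dd x j) ξ :=
      tendsto_finset_sum _ fun i _ =>
        (hDdi i).mul (tendsto_finset_sum _ fun j _ => (hAij i j).mul (hDdi j))
    exact h
  have hLc : ContinuousAt L ξ := by
    rw [hL_def]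
    have h1 : ContinuousAt (fun x => ∑ i, ∑ j, A x i j * D2d x j i) ξ :=
      tendsto_finset_sum _ fun i _ =>
        tendsto_finset_sum _ fun j _ => (hAij i j).mul (hD2dij j i)
    have h2 : ContinuousAt (fun x => ∑ i, b x i * Dd x i) ξ :=
      tendsto_finset_sum _ fun i _ => (hbi i).mul (hDdi i)
    exact h1.add h2
  have hqnn : ∀ x, 0 ≤ q x := fun x => by
    rw [hq_eq x]
    have := (hApsd x).dotProduct_mulVec_nonneg (Dd x); simpa using this
  rcases hFichera with hcase | ⟨hq0, hL0⟩
  · -- case 1: q ξ = c > 0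
    have hc : 0 < q ξ := by rw [hq_eq]; exact hcase
    set c := q ξ with hc_def
    set M : ℝ := |L ξ| + 1 with hM_def
    have hM : 0 < M := by positivity
    have hLM : L ξ < M := by
      rw [hM_def]
      nlinarith [le_abs_self (L ξ)]
    set t : ℝ := min 1 (min (c / (4 * M)) (Real.sqrt c / 2)) with ht_def
    have ht : 0 < t := by
      apply lt_min one_pos
      apply lt_min (by positivity)
      have := Real.sqrt_pos.mpr hc
      positivity
    have ht1 : t ≤ 1 := min_le_left _ _
    have htM : t * M ≤ c / 4 := by
      calc t * M ≤ (c / (4 * M)) * M := by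
            apply mul_le_mul_of_nonneg_right _ hM.le
            exact (min_le_right _ _).trans (min_le_left _ _)
        _ = c / 4 := by field_simp
    have ht2 : t ^ 2 ≤ c / 4 := by
      have h : t ≤ Real.sqrt c / 2 := (min_le_right _ _).trans (min_le_right _ _)
      have h2 : t ^ 2 ≤ (Real.sqrt c / 2) ^ 2 := pow_le_pow_left₀ ht.le h 2
      calc t ^ 2 ≤ (Real.sqrt c / 2) ^ 2 := h2
        _ = (Real.sqrt c) ^ 2 / 4 := by ring
        _ = c / 4 := by rw [Real.sq_sqrt hc.le]
    have hev : ∀ᶠ x in nhds ξ, c / 2 < q x ∧ L x < M ∧ d x < t / 2 := by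
      have e1 : ∀ᶠ x in nhds ξ, c / 2 < q x := hqc.eventually_const_lt (by linarith)
      have e2 : ∀ᶠ x in nhds ξ, L x < M := hLc.eventually_lt_const hLM
      have e3 : ∀ᶠ x in nhds ξ, d x < t / 2 :=
        hdc.eventually_lt_const (by rw [hdξ]; linarith)
      exact e1.and (e2.and e3)
    rw [Metric.eventually_nhds_iff] at hev
    obtain ⟨ρ, hρ, hball⟩ := hev
    refine ⟨t / 2, by linarith, ρ, hρ, by rw [hdξ, add_zero, sub_self], ?_⟩
    rintro x ⟨hxΩ, hxB⟩
    obtain ⟨hq2, hLx, hdx⟩ := hball (by rwa [Metric.mem_ball] at hxB)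
    have hd0 : 0 < d x := hdpos x hxΩ
    set r : ℝ := t / 2 + d x with hr_def
    have hr0 : 0 < r := by positivity
    have hrt : r < t := by rw [hr_def]; linarith
    clear_value r
    constructor
    · have h : Real.log (t / 2) ≤ Real.log r := by
        rw [hr_def]; exact Real.log_le_log (by positivity) (by linarith)
      linarith
    · rw [key_rewrite, ← hq_eq x, ← hL_eq x]
      have heq : (r ^ 2)⁻¹ * q x - r⁻¹ * L x = (q x - r * L x) / r ^ 2 := by
        field_simp
      rw [heq, le_div_iff₀ (by positivity)]
      have h1 : r * L x ≤ r * M := mul_le_mul_of_nonneg_left hLx.le hr0.le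
      have h2 : r * M ≤ t * M := mul_le_mul_of_nonneg_right hrt.le hM.le
      have h3 : r ^ 2 ≤ t ^ 2 := by nlinarith
      nlinarith
  · -- case 2: q ξ = 0, L ξ < 0
    have hL0' : L ξ < 0 := by rw [hL_eq]; exact hL0
    set m : ℝ := -(L ξ) with hm_def
    have hm : 0 < m := by rw [hm_def]; linarith
    clear_value m
    have hev : ∀ᶠ x in nhds ξ, L x < -(m / 2) ∧ d x < m / 8 := by
      have e2 : ∀ᶠ x in nhds ξ, L x < -(m / 2) :=
        hLc.eventually_lt_const (by rw [hm_def]; linarith)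
      have e3 : ∀ᶠ x in nhds ξ, d x < m / 8 :=
        hdc.eventually_lt_const (by rw [hdξ]; linarith)
      exact e2.and e3
    rw [Metric.eventually_nhds_iff] at hev
    obtain ⟨ρ, hρ, hball⟩ := hev
    refine ⟨m / 8, by linarith, ρ, hρ, by rw [hdξ, add_zero, sub_self], ?_⟩
    rintro x ⟨hxΩ, hxB⟩
    obtain ⟨hLx, hdx⟩ := hball (by rwa [Metric.mem_ball] at hxB)
    have hd0 : 0 < d x := hdpos x hxΩ
    set r : ℝ := m / 8 + d x with hr_def
    have hr0 : 0 < r := by positivity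
    have hrt : r < m / 4 := by rw [hr_def]; linarith
    clear_value r
    constructor
    · have h : Real.log (m / 8) ≤ Real.log r := by
        rw [hr_def]; exact Real.log_le_log (by positivity) (by linarith)
      linarith
    · rw [key_rewrite, ← hq_eq x, ← hL_eq x]
      have heq : (r ^ 2)⁻¹ * q x - r⁻¹ * L x = (q x - r * L x) / r ^ 2 := by
        field_simp
      rw [heq, le_div_iff₀ (by positivity)]
      have hqx := hqnn x
      have h1 : r * L x < r * (-(m / 2)) := mul_lt_mul_of_pos_left hLx hr0
      have h2 : r * r < r * (m / 4) := mul_lt_mul_of_pos_left hrt hr0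
      have hrr : r ^ 2 = r * r := by ring
      have h3 : 0 < r * m := mul_pos hr0 hm
      linarith
end

section
/- Let F satisfy degenerate ellipticity (F(x,r,p,X+Y) ≤ F(x,r,p,X) for Y ≥ 0) and positive α-homogeneity (F(x,τr,τp,τX) = τ^α F(x,r,p,X) for τ ≥ 0). Let Ω' be open, u ∈ USC(cl(Ω)) with cl(Ω) ⊂ Ω' a viscosity subsolution of F = 0 in Ω with u ≤ 0 on ∂Ω in the viscosity sense. Then the function ũ defined by ũ(x) = max(u(x), 0) for x ∈ cl(Ω) and ũ(x) = 0 for x ∈ Ω' \ cl(Ω) is an upper semicontinuous viscosity subsolution of F = 0 in all of Ω'. -/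
open Set Filter Topology

lemma second_nonneg {E : Type*} [NormedAddCommGroup E] [NormedSpace ℝ E]
    {ψ : E → ℝ} (hψ : ContDiff ℝ 2 ψ) {x₀ : E} (hmin : IsLocalMin ψ x₀) (v : E) :
    0 ≤ fderiv ℝ (fderiv ℝ ψ) x₀ v v := by
  by_contra hc
  push_neg at hc
  set g : ℝ → ℝ := fun t => ψ (x₀ + t • v) with hg_def
  set g1 : ℝ → ℝ := fun t => fderiv ℝ ψ (x₀ + t • v) v with hg1_def
  have hline : ∀ t : ℝ, HasDerivAt (fun s : ℝ => x₀ + s • v) v t := by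
    intro t
    simpa using ((hasDerivAt_id t).smul_const v).const_add x₀
  have hdiff : Differentiable ℝ ψ := hψ.differentiable (by norm_num)
  have hg : ∀ t : ℝ, HasDerivAt g (g1 t) t := by
    intro t
    exact (hdiff (x₀ + t • v)).hasFDerivAt.comp_hasDerivAt t (hline t)
  have hf1 : ContDiff ℝ 1 (fderiv ℝ ψ) := hψ.fderiv_right (by norm_num)
  have hg1 : ∀ t : ℝ, HasDerivAt g1 (fderiv ℝ (fderiv ℝ ψ) (x₀ + t • v) v v) t := by
    intro t
    have h1 : HasDerivAt (fun s : ℝ => fderiv ℝ ψ (x₀ + s • v))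
        (fderiv ℝ (fderiv ℝ ψ) (x₀ + t • v) v) t :=
      ((hf1.differentiable one_ne_zero) (x₀ + t • v)).hasFDerivAt.comp_hasDerivAt t (hline t)
    simpa using h1.clm_apply (hasDerivAt_const t v)
  -- fderiv ψ x₀ = 0
  have hD1 : fderiv ℝ ψ x₀ = 0 := hmin.fderiv_eq_zero
  have hg10 : g1 0 = 0 := by simp [hg1_def, hD1]
  -- slope of g1 at 0 tends to a negative number
  have hslope : Tendsto (slope g1 0) (𝓝[≠] (0:ℝ)) (𝓝 (fderiv ℝ (fderiv ℝ ψ) x₀ v v)) := by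
    have := hg1 0
    simp only [zero_smul, add_zero] at this
    exact hasDerivAt_iff_tendsto_slope.1 this
  have hEv1 : ∀ᶠ t in 𝓝[≠] (0:ℝ), slope g1 0 t < 0 := hslope.eventually (gt_mem_nhds hc)
  -- local min of g at 0
  have hEv2 : ∀ᶠ t in 𝓝 (0:ℝ), g 0 ≤ g t := by
    have hcont : Tendsto (fun t : ℝ => x₀ + t • v) (𝓝 0) (𝓝 x₀) := by
      have hC : Continuous (fun t : ℝ => x₀ + t • v) := by continuity
      exact hC.tendsto' 0 x₀ (by simp)
    have := hcont.eventually hmin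
    simpa [hg_def] using this
  have hEv : ∀ᶠ t in 𝓝[>] (0:ℝ), slope g1 0 t < 0 ∧ g 0 ≤ g t := by
    have h1 : ∀ᶠ t in 𝓝[>] (0:ℝ), slope g1 0 t < 0 :=
      hEv1.filter_mono (nhdsWithin_mono _ (fun t ht => ne_of_gt ht))
    have h2 : ∀ᶠ t in 𝓝[>] (0:ℝ), g 0 ≤ g t := hEv2.filter_mono nhdsWithin_le_nhds
    exact h1.and h2
  obtain ⟨δ, hδ, hδprop⟩ := (nhdsGT_basis (0:ℝ)).eventually_iff.1 hEv
  -- on (0, δ), g1 < 0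
  have hg1neg : ∀ t ∈ Ioo (0:ℝ) δ, g1 t < 0 := by
    intro t ht
    have hs := (hδprop ht).1
    rw [slope_def_field] at hs
    have h2 : g1 t / t < 0 := by simpa [hg10] using hs
    by_contra hge
    push_neg at hge
    have : 0 ≤ g1 t / t := div_nonneg hge ht.1.le
    linarith
  -- MVT on [0, δ/2]
  have hb : (0:ℝ) < δ / 2 := by linarith
  have hcg : ContinuousOn g (Icc 0 (δ/2)) :=
    (fun t _ => ((hg t).continuousAt.continuousWithinAt))
  obtain ⟨ξ, hξ, hξeq⟩ := exists_hasDerivAt_eq_slope g g1 hb hcg (fun x _ => hg x)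
  have hξδ : ξ ∈ Ioo (0:ℝ) δ := ⟨hξ.1, lt_trans hξ.2 (by linarith)⟩
  have hneg := hg1neg ξ hξδ
  have hge : g 0 ≤ g (δ/2) := (hδprop ⟨hb, by linarith⟩).2
  rw [hξeq] at hneg
  have : 0 ≤ (g (δ/2) - g 0) / (δ/2 - 0) := by
    apply div_nonneg <;> linarith
  linarith



set_option maxHeartbeats 1000000 in
set_option synthInstance.maxHeartbeats 1000000 in
open Classical in

/-- if u ∈ USC(cl Ω) is a viscosity subsolution of F = 0 in Ω with
u ≤ 0 on ∂Ω in the viscosity sense (relaxed boundary condition), and F is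
degenerate elliptic and positively α-homogeneous, then ũ = max(u,0) extended by 0
outside cl Ω is an USC viscosity subsolution of F = 0 in any open Ω' ⊇ cl Ω. -/
theorem stmt17 {N : ℕ}
    (F : EuclideanSpace ℝ (Fin N) → ℝ → (EuclideanSpace ℝ (Fin N) →L[ℝ] ℝ) →
      (EuclideanSpace ℝ (Fin N) →L[ℝ] EuclideanSpace ℝ (Fin N) →L[ℝ] ℝ) → ℝ)
    (hell : ∀ x r p (X Y : EuclideanSpace ℝ (Fin N) →L[ℝ] EuclideanSpace ℝ (Fin N) →L[ℝ] ℝ),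
      (∀ v, 0 ≤ Y v v) → F x r p (X + Y) ≤ F x r p X)
    (α : ℝ) (hα : 0 < α)
    (hhom : ∀ x r p X (τ : ℝ), 0 ≤ τ → F x (τ * r) (τ • p) (τ • X) = τ ^ α * F x r p X)
    (Ω Ω' : Set (EuclideanSpace ℝ (Fin N)))
    (hΩo : IsOpen Ω) (hΩ'o : IsOpen Ω') (hsub : closure Ω ⊆ Ω')
    (u : EuclideanSpace ℝ (Fin N) → ℝ)
    (husc : UpperSemicontinuousOn u (closure Ω))
    (hsubsol : ∀ ψ : EuclideanSpace ℝ (Fin N) → ℝ, ContDiff ℝ 2 ψ →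
      ∀ ξ ∈ closure Ω, IsMaxOn (fun y => u y - ψ y) (closure Ω) ξ →
        (ξ ∈ Ω → F ξ (u ξ) (fderiv ℝ ψ ξ) (fderiv ℝ (fderiv ℝ ψ) ξ) ≤ 0) ∧
        (ξ ∈ frontier Ω →
          max (u ξ) (F ξ (u ξ) (fderiv ℝ ψ ξ) (fderiv ℝ (fderiv ℝ ψ) ξ)) ≤ 0)) :
    UpperSemicontinuousOn
      (fun x => if x ∈ closure Ω then max (u x) 0 else 0) Ω' ∧
    ∀ ψ : EuclideanSpace ℝ (Fin N) → ℝ, ContDiff ℝ 2 ψ →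
      ∀ x₀ ∈ Ω', IsMaxOn
          (fun y => (if y ∈ closure Ω then max (u y) 0 else 0) - ψ y) Ω' x₀ →
        F x₀ (if x₀ ∈ closure Ω then max (u x₀) 0 else 0)
          (fderiv ℝ ψ x₀) (fderiv ℝ (fderiv ℝ ψ) x₀) ≤ 0 := by
  classical
  set util : EuclideanSpace ℝ (Fin N) → ℝ :=
    fun x => if x ∈ closure Ω then max (u x) 0 else 0 with hutil
  have hnonneg : ∀ x, 0 ≤ util x := by
    intro x; by_cases hx : x ∈ closure Ω <;> simp [hutil, hx]
  constructor
  · -- upper semicontinuity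
    intro x hx y hy
    have hy0 : 0 < y := lt_of_le_of_lt (hnonneg x) hy
    by_cases hxc : x ∈ closure Ω
    · have hux : u x < y := by
        have : max (u x) 0 < y := by simpa [hutil, hxc] using hy
        exact lt_of_le_of_lt (le_max_left _ _) this
      have h1 : ∀ᶠ z in 𝓝[closure Ω] x, util z < y := by
        filter_upwards [husc x hxc y hux, eventually_mem_nhdsWithin] with z hz hzc
        simpa [hutil, hzc] using max_lt hz hy0
      have h2 : ∀ᶠ z in 𝓝[(closure Ω)ᶜ] x, util z < y := by
        filter_upwards [eventually_mem_nhdsWithin] with z hz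
        simp only [Set.mem_compl_iff] at hz
        simpa [hutil, hz] using hy0
      have h3 : ∀ᶠ z in 𝓝[closure Ω ∪ (closure Ω)ᶜ] x, util z < y := by
        rw [nhdsWithin_union]; exact eventually_sup.2 ⟨h1, h2⟩
      exact h3.filter_mono (nhdsWithin_mono x (by simp))
    · have h1 : ∀ᶠ z in 𝓝 x, z ∈ (closure Ω)ᶜ :=
        isClosed_closure.isOpen_compl.eventually_mem hxc
      have h2 : ∀ᶠ z in 𝓝 x, util z < y := by
        filter_upwards [h1] with z hz
        simp only [Set.mem_compl_iff] at hz
        simpa [hutil, hz] using hy0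
      exact h2.filter_mono nhdsWithin_le_nhds
  · intro ψ hψ x₀ hx₀ hmax
    by_cases hpos : x₀ ∈ closure Ω ∧ 0 < u x₀
    · obtain ⟨hx₀c, hu0⟩ := hpos
      have hux : util x₀ = u x₀ := by simp [hutil, hx₀c, max_eq_left hu0.le]
      have hmax' : IsMaxOn (fun y => u y - ψ y) (closure Ω) x₀ := by
        intro y hy
        have h1 : util y - ψ y ≤ util x₀ - ψ x₀ := hmax (hsub hy)
        have h2 : u y ≤ util y := by simp [hutil, hy]
        simp only [Set.mem_setOf_eq] at h1 ⊢
        rw [hux] at h1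
        linarith
      obtain ⟨hin, hbd⟩ := hsubsol ψ hψ x₀ hx₀c hmax'
      have : F x₀ (u x₀) (fderiv ℝ ψ x₀) (fderiv ℝ (fderiv ℝ ψ) x₀) ≤ 0 := by
        by_cases hΩm : x₀ ∈ Ω
        · exact hin hΩm
        · have hfr : x₀ ∈ frontier Ω := by
            rw [hΩo.frontier_eq]; exact ⟨hx₀c, hΩm⟩
          exact le_trans (le_max_right _ _) (hbd hfr)
      simpa [hutil, hx₀c, max_eq_left hu0.le] using this
    · -- util x₀ = 0
      have hz : util x₀ = 0 := by
        by_cases hx₀c : x₀ ∈ closure Ω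
        · have : ¬ 0 < u x₀ := fun h => hpos ⟨hx₀c, h⟩
          push_neg at this
          simp [hutil, hx₀c, max_eq_right this]
        · simp [hutil, hx₀c]
      have hminψ : IsLocalMin ψ x₀ := by
        have hminOn : ∀ y ∈ Ω', ψ x₀ ≤ ψ y := by
          intro y hy
          have h1 : util y - ψ y ≤ util x₀ - ψ x₀ := hmax hy
          have h2 := hnonneg y
          rw [hz] at h1
          linarith
        exact Filter.eventually_of_mem (hΩ'o.mem_nhds hx₀) hminOn
      have hD1 : fderiv ℝ ψ x₀ = 0 := hminψ.fderiv_eq_zero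
      have hD2 : ∀ v, 0 ≤ fderiv ℝ (fderiv ℝ ψ) x₀ v v := second_nonneg hψ hminψ
      have hF0 : F x₀ 0 0 0 = 0 := by
        have hsp : (0:ℝ) • (0 : EuclideanSpace ℝ (Fin N) →L[ℝ] ℝ) = 0 := zero_smul ℝ _
        have hsX : (0:ℝ) • (0 : EuclideanSpace ℝ (Fin N) →L[ℝ] EuclideanSpace ℝ (Fin N) →L[ℝ] ℝ) = 0 := by
          ext; simp
        have h := hhom x₀ 0 0 0 0 le_rfl
        rw [mul_zero, hsp, hsX, Real.zero_rpow (ne_of_gt hα), zero_mul] at h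
        exact h
      have hle : F x₀ 0 0 (fderiv ℝ (fderiv ℝ ψ) x₀) ≤ 0 := by
        have h := hell x₀ 0 0 0 (fderiv ℝ (fderiv ℝ ψ) x₀) hD2
        rw [hF0] at h
        exact (congrArg (F x₀ 0 0) (zero_add (fderiv ℝ (fderiv ℝ ψ) x₀))).symm.trans_le h
      show F x₀ (util x₀) (fderiv ℝ ψ x₀) (fderiv ℝ (fderiv ℝ ψ) x₀) ≤ 0
      rw [hz, hD1]
      exact hle
end

section
/- Consider F[u] = x²·u' on Ω = (-1,1). Then μ₁(F,Ω) ≥ 0 (witnessed by φ ≡ 1 on any Ω' ⊃ [-1,1]), and the only viscosity solution U ∈ C([-1,1]) of the eigenvalue problem x²U' = 0 in (-1,1) with U = 0 on {-1,1} and U ≥ 0 is U ≡ 0; in particular no positive principal eigenfunction at level μ₁ = 0 exists. -/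
open Set Filter Real Topology

/-- Key lemma: if `U` is a viscosity subsolution of `x² U' = 0` on `(-1,1)`,
continuous on `[-1,1]`, vanishing at `±1`, and `U b > 0` at some `b`, then for
any `k > 0` making the value at `0` small enough we get a contradiction, using
the test function `ψ x = (U b / 4) · exp (k (x - b))`. -/
lemma stmt19_key (U : ℝ → ℝ) (hcont : ContinuousOn U (Set.Icc (-1) 1))
    (hsub : ∀ ψ : ℝ → ℝ, ContDiff ℝ 2 ψ → ∀ x₀ ∈ Set.Ioo (-1:ℝ) 1,
        IsMaxOn (fun y => U y - ψ y) (Set.Ioo (-1) 1) x₀ →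
          x₀ ^ 2 * deriv ψ x₀ ≤ 0)
    (hU1 : U (-1) = 0) (hU2 : U 1 = 0)
    (b : ℝ) (hb : b ∈ Set.Ioo (-1:ℝ) 1) (hδ : 0 < U b)
    (k : ℝ) (hk : 0 < k)
    (h0 : U 0 - U b / 4 * Real.exp (k * (0 - b)) < U b - U b / 4) : False := by
  set δ := U b with hδdef
  set ψ : ℝ → ℝ := fun x => δ / 4 * Real.exp (k * (x - b)) with hψdef
  have hψ2 : ContDiff ℝ 2 ψ := by
    exact contDiff_const.mul (contDiff_const.mul (contDiff_id.sub contDiff_const)).exp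
  have hψderiv : ∀ x : ℝ, deriv ψ x = δ / 4 * (Real.exp (k * (x - b)) * k) := by
    intro x
    have h1 : HasDerivAt (fun x : ℝ => k * (x - b)) k x := by
      simpa using ((hasDerivAt_id x).sub_const b).const_mul k
    have h2 : HasDerivAt (fun x : ℝ => Real.exp (k * (x - b)))
        (Real.exp (k * (x - b)) * k) x := h1.exp
    exact (h2.const_mul (δ / 4)).deriv
  have hψpos : ∀ x : ℝ, 0 < ψ x := fun x => by positivity
  -- the function U - ψ attains its max on the compact Icc
  have hfc : ContinuousOn (fun y => U y - ψ y) (Set.Icc (-1:ℝ) 1) :=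
    hcont.sub hψ2.continuous.continuousOn
  obtain ⟨x₀, hx₀mem, hmax⟩ := isCompact_Icc.exists_isMaxOn
    (Set.nonempty_Icc.mpr (by norm_num)) hfc
  have hmax' := (isMaxOn_iff).mp hmax
  have hvb : U b - ψ b = δ - δ / 4 := by
    simp [hψdef]
    exact hδdef.symm
  have hvx₀ : δ - δ / 4 ≤ U x₀ - ψ x₀ := by
    rw [← hvb]; exact hmax' b (Set.Ioo_subset_Icc_self hb)
  have hpos34 : (0:ℝ) < δ - δ / 4 := by linarith
  -- x₀ is not ±1
  have hx₀ne1 : x₀ ≠ 1 := by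
    intro h; rw [h] at hvx₀
    have := hψpos 1
    rw [hU2] at hvx₀; linarith
  have hx₀nem1 : x₀ ≠ -1 := by
    intro h; rw [h] at hvx₀
    have := hψpos (-1)
    rw [hU1] at hvx₀; linarith
  have hx₀Ioo : x₀ ∈ Set.Ioo (-1:ℝ) 1 :=
    ⟨lt_of_le_of_ne hx₀mem.1 (Ne.symm hx₀nem1), lt_of_le_of_ne hx₀mem.2 hx₀ne1⟩
  -- x₀ ≠ 0
  have hx₀ne0 : x₀ ≠ 0 := by
    intro h; rw [h] at hvx₀
    have : U 0 - ψ 0 = U 0 - δ / 4 * Real.exp (k * (0 - b)) := by simp [hψdef]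
    rw [this] at hvx₀
    linarith
  -- apply the subsolution property
  have hmaxIoo : IsMaxOn (fun y => U y - ψ y) (Set.Ioo (-1:ℝ) 1) x₀ :=
    (isMaxOn_iff).mpr fun y hy => hmax' y (Set.Ioo_subset_Icc_self hy)
  have hcon := hsub ψ hψ2 x₀ hx₀Ioo hmaxIoo
  rw [hψderiv x₀] at hcon
  have h1 : 0 < x₀ ^ 2 := by positivity
  have h2 : 0 < δ / 4 * (Real.exp (k * (x₀ - b)) * k) := by positivity
  nlinarith

/-- for F[u] = x²u' on Ω = (-1,1): μ₁(F,Ω) ≥ 0, witnessed by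
φ ≡ 1 on an open neighbourhood of [-1,1]; and the only nonnegative continuous
viscosity solution U of x²U' = 0 in (-1,1) with U(±1) = 0 is U ≡ 0 — no positive
principal eigenfunction at level μ₁ = 0 exists. -/
theorem stmt19 :
    (∃ Ω' : Set ℝ, IsOpen Ω' ∧ Set.Icc (-1:ℝ) 1 ⊆ Ω' ∧
      ∃ φ : ℝ → ℝ, ContDiffOn ℝ 2 φ Ω' ∧ (∀ x ∈ Ω', 0 < φ x) ∧
        ∀ x ∈ Ω', 0 ≤ x ^ 2 * deriv φ x) ∧
    (∀ U : ℝ → ℝ, ContinuousOn U (Set.Icc (-1) 1) →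
      -- viscosity subsolution of x²U' = 0 in (-1,1)
      (∀ ψ : ℝ → ℝ, ContDiff ℝ 2 ψ → ∀ x₀ ∈ Set.Ioo (-1:ℝ) 1,
        IsMaxOn (fun y => U y - ψ y) (Set.Ioo (-1) 1) x₀ →
          x₀ ^ 2 * deriv ψ x₀ ≤ 0) →
      -- viscosity supersolution of x²U' = 0 in (-1,1)
      (∀ ψ : ℝ → ℝ, ContDiff ℝ 2 ψ → ∀ x₀ ∈ Set.Ioo (-1:ℝ) 1,
        IsMinOn (fun y => U y - ψ y) (Set.Ioo (-1) 1) x₀ →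
          0 ≤ x₀ ^ 2 * deriv ψ x₀) →
      U (-1) = 0 → U 1 = 0 → (∀ x ∈ Set.Icc (-1:ℝ) 1, 0 ≤ U x) →
      ∀ x ∈ Set.Icc (-1:ℝ) 1, U x = 0) := by
  constructor
  · refine ⟨Set.univ, isOpen_univ, Set.subset_univ _, fun _ => 1,
      contDiffOn_const, fun x _ => one_pos, fun x _ => ?_⟩
    simp [deriv_const]
  · intro U hcont hsub hsup hU1 hU2 hpos
    -- Step 1: U vanishes on (-1, 0)
    have hleft : ∀ b ∈ Set.Ioo (-1:ℝ) 0, U b = 0 := by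
      intro b hbIoo
      by_contra hne
      have hbIoo' : b ∈ Set.Ioo (-1:ℝ) 1 := ⟨hbIoo.1, lt_trans hbIoo.2 one_pos⟩
      have hδ : 0 < U b :=
        lt_of_le_of_ne (hpos b (Set.Ioo_subset_Icc_self hbIoo')) (Ne.symm hne)
      set δ := U b with hδdef
      set E : ℝ := 4 * max (U 0) 0 / δ + 1 with hE
      have hEpos : 0 < E := by
        have h' : 0 ≤ 4 * max (U 0) 0 / δ := by positivity
        rw [hE]; linarith
      have hbneg : b < 0 := hbIoo.2
      set k : ℝ := E / (-b) with hkdef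
      have hk : 0 < k := by
        apply div_pos hEpos; linarith
      apply stmt19_key U hcont hsub hU1 hU2 b hbIoo' hδ k hk
      have hbne : b ≠ 0 := ne_of_lt hbneg
      have hkb : k * (0 - b) = E := by
        rw [hkdef]
        field_simp
        ring
      rw [hkb]
      have hexp : E + 1 ≤ Real.exp E := Real.add_one_le_exp E
      have hU0le : U 0 ≤ max (U 0) 0 := le_max_left _ _
      have hmaxnn : 0 ≤ max (U 0) 0 := le_max_right _ _
      have hEδ : δ * E = 4 * max (U 0) 0 + δ := by
        rw [hE]; field_simp
      nlinarith
    -- U 0 = 0 by continuity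
    have hU0 : U 0 = 0 := by
      have hne : (𝓝[Set.Ioo (-1:ℝ) 0] 0).NeBot := by
        apply mem_closure_iff_nhdsWithin_neBot.mp
        rw [closure_Ioo (by norm_num : (-1:ℝ) ≠ 0)]
        constructor <;> norm_num
      have hsubset : Set.Ioo (-1:ℝ) 0 ⊆ Set.Icc (-1:ℝ) 1 := fun x hx =>
        ⟨le_of_lt hx.1, le_of_lt (lt_trans hx.2 one_pos)⟩
      have h0mem : (0:ℝ) ∈ Set.Icc (-1:ℝ) 1 := by constructor <;> norm_num
      have ht1 : Filter.Tendsto U (𝓝[Set.Ioo (-1:ℝ) 0] 0) (𝓝 (U 0)) :=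
        (hcont.continuousWithinAt h0mem).mono_left (nhdsWithin_mono 0 hsubset)
      have ht2 : Filter.Tendsto U (𝓝[Set.Ioo (-1:ℝ) 0] 0) (𝓝 0) := by
        apply Filter.Tendsto.congr' _ tendsto_const_nhds
        filter_upwards [self_mem_nhdsWithin] with x hx
        exact (hleft x hx).symm
      exact tendsto_nhds_unique ht1 ht2
    -- Step 2: U vanishes on (0, 1)
    have hright : ∀ b ∈ Set.Ioo (0:ℝ) 1, U b = 0 := by
      intro b hbIoo
      by_contra hne
      have hbIoo' : b ∈ Set.Ioo (-1:ℝ) 1 := ⟨lt_trans (by norm_num) hbIoo.1, hbIoo.2⟩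
      have hδ : 0 < U b :=
        lt_of_le_of_ne (hpos b (Set.Ioo_subset_Icc_self hbIoo')) (Ne.symm hne)
      apply stmt19_key U hcont hsub hU1 hU2 b hbIoo' hδ 1 one_pos
      rw [hU0]
      have : 0 < U b / 4 * Real.exp (1 * (0 - b)) := by positivity
      linarith
    -- conclude
    intro x hx
    rcases lt_trichotomy x 0 with h | h | h
    · rcases eq_or_lt_of_le hx.1 with h1 | h1
      · rw [← h1]; exact hU1
      · exact hleft x ⟨h1, h⟩
    · rw [h]; exact hU0
    · rcases eq_or_lt_of_le hx.2 with h1 | h1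
      · rw [h1]; exact hU2
      · exact hright x ⟨h, h1⟩
end
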